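/- (Correctness of Rule 3) Let G be a bipartite graph, and let v be a vertex with exactly one neighbor u. Then G has a biclique edge cover of size k if and only if the graph G − {u, v} (remove both u and v and all their incident edges) has a biclique edge cover of size k − 1, assuming k ≥ 1. -/
import Mathlib


/-- `(A, B)` is a biclique of the bipartite graph with edge relation `E`. -/
def IsBiclique {α β : Type*} (E : α → β → Prop) (A : Set α) (B : Set β) : Prop :=
  ∀ a ∈ A, ∀ b ∈ B, E a b

/-- The bipartite graph `E` has a biclique edge cover of size `k`. -/
def HasBicCover {α β : Type*} (E : α → β → Prop) (k : ℕ) : Prop :=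
  ∃ A : Fin k → Set α, ∃ B : Fin k → Set β,
    (∀ ℓ, IsBiclique E (A ℓ) (B ℓ)) ∧ ∀ a b, E a b → ∃ ℓ, a ∈ A ℓ ∧ b ∈ B ℓ

/-- Correctness of Rule 3: if `v` (in the second class) has exactly one neighbor `u`,
    then for `k ≥ 1`, `G` has a biclique edge cover of size `k` iff `G − {u, v}` has one
    of size `k − 1`. -/
theorem rule3_correct {α β : Type*} (E : α → β → Prop) (u : α) (v : β)
    (huv : E u v) (huniq : ∀ a, E a v → a = u) (k : ℕ) (hk : 1 ≤ k) :
    HasBicCover E k ↔ HasBicCover (fun a b => a ≠ u ∧ b ≠ v ∧ E a b) (k - 1) := by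
  obtain ⟨n, rfl⟩ : ∃ n, k = n + 1 := ⟨k - 1, (Nat.succ_pred_eq_of_pos hk).symm⟩
  simp only [Nat.add_sub_cancel]
  constructor
  · rintro ⟨A, B, hbic, hcov⟩
    obtain ⟨ℓ₀, hu0, hv0⟩ := hcov u v huv
    have hA0 : ∀ a ∈ A ℓ₀, a = u := fun a ha => huniq a (hbic ℓ₀ a ha v hv0)
    refine ⟨fun i => A (ℓ₀.succAbove i) \ {u}, fun i => B (ℓ₀.succAbove i) \ {v}, ?_, ?_⟩
    · rintro i a ⟨ha, hau⟩ b ⟨hb, hbv⟩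
      exact ⟨hau, hbv, hbic _ a ha b hb⟩
    · rintro a b ⟨hau, hbv, hab⟩
      obtain ⟨ℓ, haℓ, hbℓ⟩ := hcov a b hab
      have hℓ : ℓ ≠ ℓ₀ := fun h => hau (hA0 a (h ▸ haℓ))
      obtain ⟨i, rfl⟩ := Fin.exists_succAbove_eq hℓ
      exact ⟨i, ⟨haℓ, hau⟩, ⟨hbℓ, hbv⟩⟩
  · rintro ⟨A, B, hbic, hcov⟩
    refine ⟨Fin.cases {u} A, Fin.cases {b | E u b} B, ?_, ?_⟩
    · refine Fin.cases ?_ ?_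
      · rintro a ha b hb
        simp only [Fin.cases_zero, Set.mem_singleton_iff, Set.mem_setOf_eq] at ha hb
        subst ha; exact hb
      · intro i a ha b hb
        simp only [Fin.cases_succ] at ha hb
        exact (hbic i a ha b hb).2.2
    · intro a b hab
      by_cases hbv : b = v
      · subst hbv
        exact ⟨0, by simp [huniq a hab], by simpa using huv⟩
      · by_cases hau : a = u
        · subst hau
          exact ⟨0, by simp, by simpa using hab⟩
        · obtain ⟨i, hi⟩ := hcov a b ⟨hau, hbv, hab⟩
          exact ⟨i.succ, by simpa using hi⟩
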